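/- arXiv:2102.06055 — 2 statements merged into one kernel-verified Lean document; each statement's English description precedes it below -/
import Mathlib

section
/- Let σ = (σ₁,σ₂) ∈ ℤ² and let λ be a bipartition with charged symbol Λ of charge σ and composition ϖ_Λ = (ϖ₁ ≥ ϖ₂ ≥ ⋯). Let Ỹ(λ) be the extended Young diagram of λ, namely the set of boxes (x,y,j) with j ∈ {1,2}, x ≥ 1, y ∈ ℤ and y ≤ λ^j_x. Then for every α ∈ ℤ, the set {b ∈ Ỹ(λ) : co^σ(b) ≥ α} is finite and its cardinality equals Σ_k max(ϖ_k − α, 0) (a finite sum). -/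
open scoped Classical

noncomputable section

/-- A partition: an antitone, eventually zero sequence of natural numbers.
`parts k` is the `(k+1)`-st part `λ_{k+1}`. -/
structure YPartition where
  parts : ℕ → ℕ
  antitone' : Antitone parts
  exists_zero : ∃ N, parts N = 0

namespace YPartition

lemma sorted_getD_antitone {l : List ℕ} (h : l.Pairwise (· ≥ ·)) :
    Antitone (fun k => l.getD k 0) := by
  intro i j hij
  simp only
  rcases lt_or_ge j l.length with hj | hj
  · have hi : i < l.length := lt_of_le_of_lt hij hj
    rw [List.getD_eq_getElem l 0 hj, List.getD_eq_getElem l 0 hi]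
    rcases eq_or_lt_of_le hij with rfl | hlt
    · exact le_rfl
    · exact List.pairwise_iff_getElem.mp h i j hi hj hlt
  · rw [List.getD_eq_default l 0 hj]
    exact Nat.zero_le _

/-- The partition whose multiset of (nonzero) parts is the multiset of nonzero
elements of `m`. -/
def ofMul (m : Multiset ℕ) : YPartition where
  parts := fun k => ((m.sort (· ≤ ·)).reverse).getD k 0
  antitone' := by
    apply sorted_getD_antitone
    rw [List.pairwise_reverse]
    exact Multiset.pairwise_sort m (· ≤ ·)
  exists_zero := ⟨((m.sort (· ≤ ·)).reverse).length, List.getD_eq_default _ _ le_rfl⟩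

/-- The size `|λ|` of a partition: the sum of its parts. -/
def size (p : YPartition) : ℕ := ∑ i ∈ Finset.range (Nat.find p.exists_zero), p.parts i

lemma finite_gt (p : YPartition) (k : ℕ) : {i : ℕ | k < p.parts i}.Finite := by
  obtain ⟨N, hN⟩ := p.exists_zero
  apply (Set.finite_Iio N).subset
  intro i hi
  simp only [Set.mem_setOf_eq] at hi
  by_contra hc
  simp only [Set.mem_Iio, not_lt] at hc
  have := p.antitone' hc
  omega

/-- The conjugate (transpose) partition. -/
def conj (p : YPartition) : YPartition where
  parts := fun k => {i : ℕ | k < p.parts i}.ncard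
  antitone' := fun a b hab =>
    Set.ncard_le_ncard (fun i hi => lt_of_le_of_lt hab hi) (p.finite_gt a)
  exists_zero := by
    refine ⟨p.parts 0, ?_⟩
    have h : {i : ℕ | p.parts 0 < p.parts i} = ∅ := by
      ext i
      simp only [Set.mem_setOf_eq, Set.mem_empty_iff_false, iff_false, not_lt]
      exact p.antitone' (Nat.zero_le i)
    show {i : ℕ | p.parts 0 < p.parts i}.ncard = 0
    rw [h, Set.ncard_empty]

/-- The 180°-rotation of the complement of `p` inside the rectangle with
`rows` rows of length `c`: the partition `(c - p_rows, c - p_{rows-1}, …, c - p₁)`. -/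
def rotCompl (c rows : ℕ) (p : YPartition) : YPartition where
  parts := fun k => if k < rows then c - p.parts (rows - 1 - k) else 0
  antitone' := by
    intro a b hab
    by_cases hb : b < rows
    · have ha : a < rows := lt_of_le_of_lt hab hb
      simp only [if_pos hb, if_pos ha]
      exact Nat.sub_le_sub_left (p.antitone' (by omega)) c
    · simp only [if_neg hb]
      exact Nat.zero_le _
  exists_zero := ⟨rows, by simp⟩

end YPartition

/-- A bipartition: a pair of partitions. -/
abbrev Bipartition := YPartition × YPartition

/-- The size of a bipartition. -/
def Bipartition.size (l : Bipartition) : ℕ := l.1.size + l.2.size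

/-- The bipartition whose components have parts the multisets `a` and `b`. -/
def bip (a b : Multiset ℕ) : Bipartition := (YPartition.ofMul a, YPartition.ofMul b)

/-- The multiset of parts of the partition `a 1^b` (one part `a`, then `b` parts `1`). -/
def hook (a b : ℕ) : Multiset ℕ := a ::ₘ Multiset.replicate b 1

/-- The charged β-set of a partition, as a sequence:
`betaSet p s i = λ_{i+1} + s - (i+1) + 1`. -/
def betaSet (p : YPartition) (s : ℤ) (i : ℕ) : ℤ := (p.parts i : ℤ) + s - i

/-- The charged symbol of a bipartition with charge `σ`, as a pair of subsets of `ℤ`. -/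
def symbolOf (l : Bipartition) (σ : ℤ × ℤ) : Set ℤ × Set ℤ :=
  (Set.range (betaSet l.1 σ.1), Set.range (betaSet l.2 σ.2))

/-- The charge `σ_t`. -/
def sigmaT (t : ℕ) : ℤ × ℤ :=
  if Even t then ((t : ℤ), -1 - (t : ℤ)) else (-1 - (t : ℤ), (t : ℤ))

/-- The trivial symbol `({0,-1,-2,…},{-1,-2,-3,…})`, the symbol of the empty
bipartition with charge `σ₀ = (0,-1)`. -/
def trivialSymbol : Set ℤ × Set ℤ := ({z : ℤ | z ≤ 0}, {z : ℤ | z ≤ -1})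

/-- Removing one `n`-co-hook from the symbol `Λ`, yielding `Λ'`: remove `x+n` from one
row, adjoin `x` to the other row, and exchange the two rows. -/
def CohookStep (n : ℕ) (Λ Λ' : Set ℤ × Set ℤ) : Prop :=
  (∃ x : ℤ, x + n ∈ Λ.1 ∧ x ∉ Λ.2 ∧ Λ' = (Λ.2 ∪ {x}, Λ.1 \ {x + n})) ∨
  (∃ x : ℤ, x + n ∈ Λ.2 ∧ x ∉ Λ.1 ∧ Λ' = (Λ.2 \ {x + n}, Λ.1 ∪ {x}))

/-- `C` is the `n`-co-core of `Λ`: it is obtained from `Λ` by recursively removing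
`n`-co-hooks, and no further `n`-co-hook can be removed. -/
def IsCocore (n : ℕ) (Λ C : Set ℤ × Set ℤ) : Prop :=
  Relation.ReflTransGen (CohookStep n) Λ C ∧ ∀ C', ¬ CohookStep n C C'

/-- Number of entries of the charged β-set of `p` that are `≥ α` (with multiplicity). -/
def betaCountGE (p : YPartition) (s α : ℤ) : ℕ := Nat.card {i : ℕ // α ≤ betaSet p s i}

/-- Number of entries `≥ α`, with multiplicity, of the multiset union of the two rows
of the symbol of `l` with charge `σ`. -/
def symCountGE (l : Bipartition) (σ : ℤ × ℤ) (α : ℤ) : ℕ :=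
  betaCountGE l.1 σ.1 α + betaCountGE l.2 σ.2 α

/-- The composition `ϖ_Λ` of the symbol of `l` with charge `σ`: `comp l σ k` is the
`(k+1)`-st largest entry (with multiplicity) of the multiset union of the two rows. -/
def comp (l : Bipartition) (σ : ℤ × ℤ) (k : ℕ) : ℤ :=
  sSup {z : ℤ | k + 1 ≤ symCountGE l σ z}

/-- All partial sums of the composition of the symbol `(l,σ)` are bounded by those of
`(m,τ)`. -/
def DomLE (l : Bipartition) (σ : ℤ × ℤ) (m : Bipartition) (τ : ℤ × ℤ) : Prop :=
  ∀ j : ℕ, ∑ k ∈ Finset.range j, comp l σ k ≤ ∑ k ∈ Finset.range j, comp m τ k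

/-- Strict dominance `Λ ⊲ Λ'` of symbols: the compositions differ and all partial sums
of the first are bounded by those of the second. -/
def DomLT (l : Bipartition) (σ : ℤ × ℤ) (m : Bipartition) (τ : ℤ × ℤ) : Prop :=
  comp l σ ≠ comp m τ ∧ DomLE l σ m τ

/-- A box `(x, y, j)` (0-indexed row `x`, 0-indexed column `y`, component `j`:
`j = 0` is the first component, `j = 1` the second). -/
abbrev Box := ℕ × ℕ × Fin 2

/-- The component of a bipartition selected by `j : Fin 2`. -/
def Bipartition.partsOf (l : Bipartition) (j : Fin 2) : YPartition := if j = 0 then l.1 else l.2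

/-- Membership of a box in the Young diagram of a bipartition. -/
def MemY (l : Bipartition) (b : Box) : Prop := b.2.1 < (l.partsOf b.2.2).parts b.1

/-- The entry of the charge `σ` corresponding to component `j`. -/
def chargeOf (σ : ℤ × ℤ) (j : Fin 2) : ℤ := if j = 0 then σ.1 else σ.2

/-- The charged content `co^σ(b) = y - x + σ_j` of a box. -/
def content (σ : ℤ × ℤ) (b : Box) : ℤ := (b.2.1 : ℤ) - (b.1 : ℤ) + chargeOf σ b.2.2

/-- `j(b) ∈ {1,2}`: the component of a box, numbered 1 or 2. -/
def jval (b : Box) : ℕ := (b.2.2 : ℕ) + 1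

/-- The counting function of the Dunkl–Griffeth order. -/
def dgCount (l : Bipartition) (s : ℤ × ℤ) (d : ℕ) (α : ℝ) (j : ℕ) : ℕ :=
  Nat.card {b : Box // MemY l b ∧
    (α < (content s b : ℝ) - (jval b : ℝ) * (d : ℝ) / 2 ∨
      ((content s b : ℝ) - (jval b : ℝ) * (d : ℝ) / 2 = α ∧ jval b ≤ j))}

/-- The Dunkl–Griffeth order `λ ⪯_s μ` (with respect to `d`). -/
def DGLE (l m : Bipartition) (s : ℤ × ℤ) (d : ℕ) : Prop :=
  ∀ (α : ℝ), ∀ j ∈ ({1, 2} : Set ℕ), dgCount l s d α j ≤ dgCount m s d α j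

/-- A box of the extended Young diagram: rows are infinite to the left, so the column
coordinate is an integer.  `(x, y, j)` is the box in (0-indexed) row `x`, with integer
column coordinate `y` (`y = 0` is the first column), in component `j`. -/
abbrev ExtBox := ℕ × ℤ × Fin 2

/-- Membership in the extended Young diagram of a bipartition. -/
def MemExtY (l : Bipartition) (b : ExtBox) : Prop :=
  b.2.1 < ((l.partsOf b.2.2).parts b.1 : ℤ)

/-- The charged content of an extended box. -/
def contentExt (σ : ℤ × ℤ) (b : ExtBox) : ℤ := b.2.1 - (b.1 : ℤ) + chargeOf σ b.2.2

/-- `b` is a removable box of the bipartition `l`. -/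
def Removable (l : Bipartition) (b : Box) : Prop :=
  (l.partsOf b.2.2).parts b.1 = b.2.1 + 1 ∧ (l.partsOf b.2.2).parts (b.1 + 1) ≤ b.2.1

/-- `b` is an addable box of the bipartition `l`. -/
def Addable (l : Bipartition) (b : Box) : Prop :=
  (l.partsOf b.2.2).parts b.1 = b.2.1 ∧
    (b.1 = 0 ∨ b.2.1 + 1 ≤ (l.partsOf b.2.2).parts (b.1 - 1))

/-- The order in which boxes are listed in the `i`-word: increasing charged content,
a component-2 box preceding a component-1 box of equal charged content. -/
def BoxLT (σ : ℤ × ℤ) (b b' : Box) : Prop :=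
  content σ b < content σ b' ∨
    (content σ b = content σ b' ∧ b.2.2 = 1 ∧ b'.2.2 = 0)

/-- `L` is the list of boxes underlying the `i`-word of `(l, σ)` with respect to `d`:
it lists, in increasing order, exactly the addable and removable boxes of `l` whose
charged content is congruent to `i` modulo `d`. -/
def IsIWord (l : Bipartition) (σ : ℤ × ℤ) (d : ℕ) (i : ZMod d) (L : List Box) : Prop :=
  L.Pairwise (BoxLT σ) ∧
    ∀ b : Box, b ∈ L ↔ ((Addable l b ∨ Removable l b) ∧ ((content σ b : ZMod d) = i))

/-- The sign of a box in the `i`-word: `true` (`+`) for addable, `false` (`−`) for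
removable boxes. -/
def signOf (l : Bipartition) (b : Box) : Bool := if Addable l b then true else false

/-- One reduction step on words: delete an adjacent pair `−+`. -/
def RedStep (w w' : List Bool) : Prop :=
  ∃ u v : List Bool, w = u ++ false :: true :: v ∧ w' = u ++ v

/-- `ẽ_i l = 0`: the reduced `i`-word of `(l, σ)` contains no `−`, i.e. the `i`-word
reduces to a word consisting only of `+`'s. -/
def AnnihilatedE (l : Bipartition) (σ : ℤ × ℤ) (d : ℕ) (i : ZMod d) : Prop :=
  ∃ L : List Box, IsIWord l σ d i L ∧
    ∃ a : ℕ, Relation.ReflTransGen RedStep (L.map (signOf l)) (List.replicate a true)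

/-- `q` is obtained from the partition `p` by adding one box. -/
def PCovers (p q : YPartition) : Prop :=
  ∃ x : ℕ, q.parts x = p.parts x + 1 ∧ ∀ y : ℕ, y ≠ x → q.parts y = p.parts y

/-- `m` is obtained from the bipartition `l` by adding one box to its Young diagram. -/
def BipCovers (l m : Bipartition) : Prop :=
  (PCovers l.1 m.1 ∧ m.2 = l.2) ∨ (m.1 = l.1 ∧ PCovers l.2 m.2)

/-- `A(l) = Σ_μ μ`, the sum over all bipartitions obtained from `l` by adding one box,
as an element of the group of `ℤ`-valued functions on bipartitions. -/
def addB (l : Bipartition) : Bipartition → ℤ := fun m => if BipCovers l m then 1 else 0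

/-- The projection `π_S` onto the span of the bipartitions lying in `S`. -/
def projS (S : Set Bipartition) (f : Bipartition → ℤ) : Bipartition → ℤ :=
  fun m => if m ∈ S then f m else 0

/-- The basis element of `ℤ[BP]` corresponding to a bipartition. -/
def deltaB (l : Bipartition) : Bipartition → ℤ := fun m => if m = l then 1 else 0

/-- The bipartitions of `2n` labelling the principal-series unipotent characters in
the principal `Φ_{2n}`-block. -/
def PS (n : ℕ) : Set Bipartition :=
  {l | (∃ i j : ℕ, 0 < i ∧ i < n ∧ j ≤ n ∧
          l = bip (hook (n - i) j) (hook (n - j + 1) (i - 1))) ∨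
       (∃ j : ℕ, j < 2 * n ∧ l = bip (hook (2 * n - j) j) 0) ∨
       (∃ i : ℕ, 0 < i ∧ i ≤ 2 * n ∧ l = bip 0 (hook (2 * n - i + 1) (i - 1)))}

/-- The bipartitions of `2n-2` labelling the `B₂`-series unipotent characters in the
principal `Φ_{2n}`-block: `2^i 1^{j-i-1} . (n-i-1)(n-j)` for `0 ≤ i < j ≤ n`. -/
def LB2 (n : ℕ) : Set Bipartition :=
  {l | ∃ i j : ℕ, i < j ∧ j ≤ n ∧
        l = bip (Multiset.replicate i 2 + Multiset.replicate (j - i - 1) 1)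
                {n - i - 1, n - j}}

/-- The bipartitions of `2n-6` labelling the `B₆`-series unipotent characters in the
principal `Φ_{2n}`-block: `(n-i-2)(n-j-1) . 2^{i-1} 1^{j-i-1}` for `0 < i < j < n`. -/
def LB6 (n : ℕ) : Set Bipartition :=
  {l | ∃ i j : ℕ, 0 < i ∧ i < j ∧ j < n ∧
        l = bip {n - i - 2, n - j - 1}
                (Multiset.replicate (i - 1) 2 + Multiset.replicate (j - i - 1) 1)}

end

section CompAux

lemma betaSet_anti (p : YPartition) (s : ℤ) : Antitone (betaSet p s) := by
  intro i j hij
  have h := p.antitone' hij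
  unfold betaSet
  omega

lemma betaSet_le_sub (p : YPartition) (s : ℤ) (i : ℕ) :
    betaSet p s i ≤ betaSet p s 0 - i := by
  have h := p.antitone' (Nat.zero_le i)
  unfold betaSet
  omega

lemma betaGE_finite (p : YPartition) (s z : ℤ) : {i : ℕ | z ≤ betaSet p s i}.Finite := by
  apply (Set.finite_Iic (betaSet p s 0 - z).toNat).subset
  intro i hi
  have h1 := betaSet_le_sub p s i
  simp only [Set.mem_setOf_eq] at hi
  simp only [Set.mem_Iic]
  omega

lemma betaCountGE_eq_ncard (p : YPartition) (s z : ℤ) :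
    betaCountGE p s z = {i : ℕ | z ≤ betaSet p s i}.ncard := Nat.card_coe_set_eq _

lemma mem_iff_lt_betaCountGE (p : YPartition) (s z : ℤ) (i : ℕ) :
    z ≤ betaSet p s i ↔ i < betaCountGE p s z := by
  rw [betaCountGE_eq_ncard]
  have hfin := betaGE_finite p s z
  constructor
  · intro h
    have hsub : Set.Iic i ⊆ {i : ℕ | z ≤ betaSet p s i} :=
      fun j hj => le_trans h (betaSet_anti p s hj)
    have h2 := Set.ncard_le_ncard hsub hfin
    have h3 : (Set.Iic i).ncard = i + 1 := by
      rw [← Finset.coe_Iic, Set.ncard_coe_finset, Nat.card_Iic]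
    omega
  · intro h
    by_contra hc
    push_neg at hc
    have hsub : {i : ℕ | z ≤ betaSet p s i} ⊆ Set.Iio i := by
      intro j hj
      simp only [Set.mem_setOf_eq] at hj
      simp only [Set.mem_Iio]
      by_contra hji
      push_neg at hji
      have := betaSet_anti p s hji
      omega
    have h2 := Set.ncard_le_ncard hsub (Set.finite_Iio i)
    have h3 : (Set.Iio i).ncard = i := by
      rw [← Finset.coe_range, Set.ncard_coe_finset, Finset.card_range]
    omega

lemma betaCountGE_anti (p : YPartition) (s : ℤ) {z z' : ℤ} (h : z ≤ z') :
    betaCountGE p s z' ≤ betaCountGE p s z := by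
  by_contra hc
  push_neg at hc
  have h2 := (mem_iff_lt_betaCountGE p s z' _).mpr hc
  have h3 := (mem_iff_lt_betaCountGE p s z _).mp (le_trans h h2)
  omega

lemma betaCountGE_eq_zero (p : YPartition) (s z : ℤ) (h : betaSet p s 0 < z) :
    betaCountGE p s z = 0 := by
  by_contra h0
  have h1 := (mem_iff_lt_betaCountGE p s z 0).mpr (Nat.pos_of_ne_zero h0)
  omega

lemma symCountGE_def' (l : Bipartition) (sg : ℤ × ℤ) (z : ℤ) :
    symCountGE l sg z = betaCountGE l.1 sg.1 z + betaCountGE l.2 sg.2 z := rfl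

lemma symCountGE_anti (l : Bipartition) (sg : ℤ × ℤ) {z z' : ℤ} (h : z ≤ z') :
    symCountGE l sg z' ≤ symCountGE l sg z :=
  Nat.add_le_add (betaCountGE_anti _ _ h) (betaCountGE_anti _ _ h)

lemma symCountGE_eq_zero (l : Bipartition) (sg : ℤ × ℤ) (z : ℤ)
    (h : max (betaSet l.1 sg.1 0) (betaSet l.2 sg.2 0) < z) :
    symCountGE l sg z = 0 := by
  rw [symCountGE_def', betaCountGE_eq_zero _ _ _ (lt_of_le_of_lt (le_max_left _ _) h),
    betaCountGE_eq_zero _ _ _ (lt_of_le_of_lt (le_max_right _ _) h)]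

lemma le_comp_iff (l : Bipartition) (sg : ℤ × ℤ) (k : ℕ) (z : ℤ) :
    z ≤ comp l sg k ↔ k + 1 ≤ symCountGE l sg z := by
  have hne : {z : ℤ | k + 1 ≤ symCountGE l sg z}.Nonempty := by
    refine ⟨min (betaSet l.1 sg.1 k) (betaSet l.2 sg.2 k), ?_⟩
    have h1 := (mem_iff_lt_betaCountGE l.1 sg.1 _ k).mp
      (min_le_left (betaSet l.1 sg.1 k) (betaSet l.2 sg.2 k))
    simp only [Set.mem_setOf_eq, symCountGE_def']
    omega
  have hbdd : BddAbove {z : ℤ | k + 1 ≤ symCountGE l sg z} := by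
    refine ⟨max (betaSet l.1 sg.1 0) (betaSet l.2 sg.2 0), fun z hz => ?_⟩
    simp only [Set.mem_setOf_eq] at hz
    by_contra hc
    push_neg at hc
    rw [symCountGE_eq_zero l sg z hc] at hz
    omega
  have hmem : comp l sg k ∈ {z : ℤ | k + 1 ≤ symCountGE l sg z} :=
    Int.csSup_mem hne hbdd
  constructor
  · intro h
    exact le_trans hmem (symCountGE_anti l sg h)
  · intro h
    exact le_csSup hbdd h

lemma comp_le_max (l : Bipartition) (sg : ℤ × ℤ) (k : ℕ) :
    comp l sg k ≤ max (betaSet l.1 sg.1 0) (betaSet l.2 sg.2 0) := by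
  by_contra hc
  push_neg at hc
  have h := (le_comp_iff l sg k (comp l sg k)).mp le_rfl
  rw [symCountGE_eq_zero l sg _ hc] at h
  omega

end CompAux
/-- For every `α ∈ ℤ`, the set of boxes of the extended Young diagram
of `l` whose charged content is `≥ α` is finite, of cardinality `Σ_k max(ϖ_k - α, 0)`. -/
theorem decomposition_numbers_stmt1 (sg : ℤ × ℤ) (l : Bipartition) (α : ℤ) :
    {b : ExtBox | MemExtY l b ∧ α ≤ contentExt sg b}.Finite ∧
    {b : ExtBox | MemExtY l b ∧ α ≤ contentExt sg b}.ncard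
      = ∑' k : ℕ, (comp l sg k - α).toNat := by
  classical
  set zmax : ℤ := max (betaSet l.1 sg.1 0) (betaSet l.2 sg.2 0) with hzmax
  set M : ℕ := (zmax - α).toNat with hM
  set N : ℕ := symCountGE l sg (α + 1) with hN
  have hβ0 : ∀ j : Fin 2, betaSet (l.partsOf j) (chargeOf sg j) 0 ≤ zmax := by
    intro j
    rw [hzmax]
    fin_cases j
    · exact le_max_left _ _
    · exact le_max_right _ _
  have hsym' : ∀ z : ℤ, symCountGE l sg z
      = betaCountGE (l.partsOf 0) (chargeOf sg 0) z
        + betaCountGE (l.partsOf 1) (chargeOf sg 1) z := fun _ => rfl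
  set e : Fin 2 × ℕ × ℕ → ExtBox :=
    fun p => (p.2.1, α + p.2.2 + p.2.1 - chargeOf sg p.1, p.1) with he
  set G : Finset (Fin 2 × ℕ × ℕ) :=
    (Finset.univ ×ˢ Finset.range M ×ˢ Finset.range M).filter
      (fun p => α + 1 + (p.2.2 : ℤ) ≤ betaSet (l.partsOf p.1) (chargeOf sg p.1) p.2.1)
      with hG
  have einj : Function.Injective e := by
    rintro ⟨j, x, m⟩ ⟨j', x', m'⟩ h
    simp only [he, Prod.mk.injEq] at h
    obtain ⟨h1, h2, h3⟩ := h
    subst h1; subst h3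
    have hm : m = m' := by exact_mod_cast (by omega : (m : ℤ) = m')
    rw [hm]
  have hEG : {b : ExtBox | MemExtY l b ∧ α ≤ contentExt sg b} = ↑(G.image e) := by
    ext ⟨x, y, j⟩
    simp only [Set.mem_setOf_eq, Finset.coe_image, Set.mem_image, Finset.mem_coe, hG,
      Finset.mem_filter, Finset.mem_product, Finset.mem_univ, Finset.mem_range, true_and]
    constructor
    · rintro ⟨hmem, hco⟩
      unfold MemExtY at hmem
      unfold contentExt at hco
      simp only at hmem hco
      have hb := betaSet_le_sub (l.partsOf j) (chargeOf sg j) x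
      have hb0 := hβ0 j
      have hbeta : betaSet (l.partsOf j) (chargeOf sg j) x
          = ((l.partsOf j).parts x : ℤ) + chargeOf sg j - x := rfl
      refine ⟨(j, x, (y - α - x + chargeOf sg j).toNat), ⟨⟨?_, ?_⟩, ?_⟩, ?_⟩
      · show x < M
        omega
      · show (y - α - x + chargeOf sg j).toNat < M
        omega
      · show α + 1 + ((y - α - x + chargeOf sg j).toNat : ℤ)
          ≤ betaSet (l.partsOf j) (chargeOf sg j) x
        omega
      · simp only [he, Prod.mk.injEq, and_true, true_and]
        omega
    · rintro ⟨⟨j', x', m⟩, ⟨⟨hx', hm⟩, hcond⟩, heq⟩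
      simp only [he, Prod.mk.injEq] at heq
      obtain ⟨hx, hy, hj⟩ := heq
      subst hx; subst hj
      simp only at hcond
      have hbeta : betaSet (l.partsOf j') (chargeOf sg j') x'
          = ((l.partsOf j').parts x' : ℤ) + chargeOf sg j' - x' := rfl
      constructor
      · unfold MemExtY
        simp only
        omega
      · unfold contentExt
        simp only
        omega
  have hfin : {b : ExtBox | MemExtY l b ∧ α ≤ contentExt sg b}.Finite := by
    rw [hEG]; exact (G.image e).finite_toSet
  refine ⟨hfin, ?_⟩
  have hcard1 : {b : ExtBox | MemExtY l b ∧ α ≤ contentExt sg b}.ncard = G.card := by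
    rw [hEG, Set.ncard_coe_finset, Finset.card_image_of_injective _ einj]
  -- bound on counts
  have hcnt_le : ∀ (j : Fin 2) (mz : ℤ), α + 1 ≤ mz →
      betaCountGE (l.partsOf j) (chargeOf sg j) mz ≤ M := by
    intro j mz hmz
    by_contra hc
    push_neg at hc
    have h1 := (mem_iff_lt_betaCountGE (l.partsOf j) (chargeOf sg j) mz M).mpr hc
    have h2 := betaSet_le_sub (l.partsOf j) (chargeOf sg j) M
    have h3 := hβ0 j
    omega
  -- LHS: G.card = ∑ m < M, symCountGE (α+1+m)
  have hGcard : G.card = ∑ m ∈ Finset.range M, symCountGE l sg (α + 1 + m) := by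
    rw [hG, Finset.card_filter, Finset.sum_product]
    have step : ∀ j : Fin 2,
        (∑ q ∈ Finset.range M ×ˢ Finset.range M,
          if α + 1 + (q.2 : ℤ) ≤ betaSet (l.partsOf j) (chargeOf sg j) q.1 then 1 else 0)
        = ∑ m ∈ Finset.range M, betaCountGE (l.partsOf j) (chargeOf sg j) (α + 1 + m) := by
      intro j
      rw [Finset.sum_product, Finset.sum_comm]
      refine Finset.sum_congr rfl (fun m hm => ?_)
      rw [← Finset.card_filter]
      have hle := hcnt_le j (α + 1 + m) (by omega)
      rw [show (Finset.range M).filter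
            (fun x => α + 1 + (m : ℤ) ≤ betaSet (l.partsOf j) (chargeOf sg j) x)
          = Finset.range (betaCountGE (l.partsOf j) (chargeOf sg j) (α + 1 + m)) from ?_,
        Finset.card_range]
      ext x
      simp only [Finset.mem_filter, Finset.mem_range]
      constructor
      · rintro ⟨hxM, hx⟩
        exact (mem_iff_lt_betaCountGE _ _ _ x).mp hx
      · intro hx
        exact ⟨lt_of_lt_of_le hx hle, (mem_iff_lt_betaCountGE _ _ _ x).mpr hx⟩
    calc (∑ j : Fin 2, ∑ q ∈ Finset.range M ×ˢ Finset.range M,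
          if α + 1 + ((j, q).2.2 : ℤ)
            ≤ betaSet (l.partsOf (j, q).1) (chargeOf sg (j, q).1) (j, q).2.1 then 1 else 0)
        = ∑ j : Fin 2, ∑ m ∈ Finset.range M,
            betaCountGE (l.partsOf j) (chargeOf sg j) (α + 1 + m) := by
          exact Finset.sum_congr rfl (fun j _ => step j)
      _ = ∑ m ∈ Finset.range M, symCountGE l sg (α + 1 + m) := by
          rw [Fin.sum_univ_two, ← Finset.sum_add_distrib]
          exact Finset.sum_congr rfl (fun m _ => (hsym' (α + 1 + m)).symm)
  -- RHS
  have hcompM : ∀ k : ℕ, (comp l sg k - α).toNat ≤ M := by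
    intro k
    have h := comp_le_max l sg k
    rw [← hzmax] at h
    omega
  have htsum : ∑' k : ℕ, (comp l sg k - α).toNat
      = ∑ k ∈ Finset.range N, (comp l sg k - α).toNat := by
    refine tsum_eq_sum (fun k hk => ?_)
    simp only [Finset.mem_range, not_lt] at hk
    have h2 : comp l sg k ≤ α := by
      by_contra hc
      push_neg at hc
      have := (le_comp_iff l sg k (α + 1)).mp (by omega)
      omega
    omega
  have hinner : ∀ k ∈ Finset.range N, (comp l sg k - α).toNat
      = ∑ m ∈ Finset.range M, if α + 1 + (m : ℤ) ≤ comp l sg k then 1 else 0 := by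
    intro k _
    rw [← Finset.card_filter]
    have hle := hcompM k
    rw [show (Finset.range M).filter (fun m : ℕ => α + 1 + (m : ℤ) ≤ comp l sg k)
        = Finset.range ((comp l sg k - α).toNat) from ?_, Finset.card_range]
    ext m
    simp only [Finset.mem_filter, Finset.mem_range]
    omega
  have hswap : (∑ k ∈ Finset.range N, ∑ m ∈ Finset.range M,
        if α + 1 + (m : ℤ) ≤ comp l sg k then 1 else 0)
      = ∑ m ∈ Finset.range M, symCountGE l sg (α + 1 + m) := by
    rw [Finset.sum_comm]
    refine Finset.sum_congr rfl (fun m hm => ?_)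
    rw [← Finset.card_filter]
    have hCle : symCountGE l sg (α + 1 + m) ≤ N := by
      rw [hN]
      exact symCountGE_anti l sg (by omega)
    rw [show (Finset.range N).filter (fun k => α + 1 + (m : ℤ) ≤ comp l sg k)
        = Finset.range (symCountGE l sg (α + 1 + (m : ℤ))) from ?_, Finset.card_range]
    ext k
    simp only [Finset.mem_filter, Finset.mem_range]
    constructor
    · rintro ⟨hkN, hc⟩
      have := (le_comp_iff l sg k _).mp hc
      omega
    · intro hk
      exact ⟨lt_of_lt_of_le hk hCle, (le_comp_iff l sg k _).mpr (by omega)⟩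
  rw [hcard1, hGcard, htsum, Finset.sum_congr rfl hinner, hswap]
end

section
/- Let n ≥ 2 and let S = PS(n). Then in the free abelian group ℤ[BP] on the set of bipartitions, π_S( Σ_{i=1}^{2n−1} (−1)^{i−1} A( i1^{2n−i−1}.∅ ) ) = 1^{2n}.∅ + 2n.∅ + (−1)^n (n−1)1^n.1. -/
open scoped Classical

/-! ### Auxiliary material for the proof -/

section Aux

lemma YPartition.ext' {p q : YPartition} (h : p.parts = q.parts) : p = q := by
  cases p; cases q; simpa using h

/-- Explicit parts function of the hook `a 1^b`. -/
def hkp (a b : ℕ) : ℕ → ℕ := fun k => if k = 0 then a else if k ≤ b then 1 else 0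

lemma sort_hook (a b : ℕ) (ha : 1 ≤ a) :
    (hook a b).sort (· ≤ ·) = List.replicate b 1 ++ [a] := by
  refine (fun hp h1 h2 => List.Perm.eq_of_pairwise' (r := (· ≤ ·)) h1 h2 hp) ?_ ?_ ?_
  · rw [← Multiset.coe_eq_coe, Multiset.sort_eq]
    show hook a b = ((List.replicate b 1 ++ [a] : List ℕ) : Multiset ℕ)
    rw [hook, ← Multiset.coe_replicate, Multiset.cons_coe, Multiset.coe_eq_coe]
    exact (List.perm_append_singleton a (List.replicate b 1)).symm
  · exact Multiset.pairwise_sort _ _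
  · rw [List.pairwise_append]
    refine ⟨?_, ?_, ?_⟩
    · exact List.pairwise_replicate.2 (Or.inr le_rfl)
    · simp
    · intro x hx c hc
      simp only [List.eq_of_mem_replicate hx, List.mem_singleton.1 hc]
      omega

lemma parts_hook (a b : ℕ) (ha : 1 ≤ a) :
    (YPartition.ofMul (hook a b)).parts = hkp a b := by
  funext k
  show ((hook a b).sort (· ≤ ·)).reverse.getD k 0 = hkp a b k
  rw [sort_hook a b ha, List.reverse_append, List.reverse_replicate]
  show (a :: List.replicate b 1).getD k 0 = hkp a b k
  cases k with
  | zero => simp [hkp]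
  | succ k =>
    rw [List.getD_cons_succ]
    unfold hkp
    rcases Nat.lt_or_ge k b with hk | hk
    · rw [List.getD_eq_getElem _ 0 (by simpa using hk), List.getElem_replicate,
        if_neg (by omega : ¬(k + 1 = 0)), if_pos (by omega : k + 1 ≤ b)]
    · rw [List.getD_eq_default _ 0 (by simpa using hk),
        if_neg (by omega : ¬(k + 1 = 0)), if_neg (by omega : ¬(k + 1 ≤ b))]

lemma parts_zeroP : (YPartition.ofMul 0).parts = fun _ => 0 := by
  funext k
  show ((0 : Multiset ℕ).sort (· ≤ ·)).reverse.getD k 0 = 0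
  rw [Multiset.sort_zero]
  simp

lemma parts_zeroP' (k : ℕ) : (YPartition.ofMul 0).parts k = 0 := congrFun parts_zeroP k

lemma hook_one_zero : hook 1 0 = ({1} : Multiset ℕ) := by simp [hook]

/-- Classification of single-box additions to a hook. -/
lemma pcovers_classify {a b : ℕ} (ha : 1 ≤ a) {p q : YPartition}
    (hp : p.parts = hkp a b) (h : PCovers p q) :
    q.parts = hkp (a + 1) b ∨ q.parts = hkp a (b + 1) ∨ q.parts 1 = 2 := by
  obtain ⟨x, h1, h2⟩ := h
  rw [hp] at h1
  have h2' : ∀ y, y ≠ x → q.parts y = hkp a b y := by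
    intro y hy; rw [h2 y hy, hp]
  clear h2 hp
  rcases Nat.eq_zero_or_pos x with rfl | hx
  · left
    funext y
    rcases Nat.eq_zero_or_pos y with rfl | hy
    · rw [h1]; simp [hkp]
    · rw [h2' y (by omega)]; simp only [hkp]; split_ifs <;> (try simp_all) <;> omega
  · by_cases hxb : x ≤ b
    · have hqx : q.parts x = 2 := by rw [h1]; simp only [hkp]; split_ifs <;> (try simp_all) <;> omega
      rcases eq_or_lt_of_le (show 1 ≤ x from hx) with h1x | h1x
      · right; right; rw [← h1x] at hqx; exact hqx
      · exfalso
        have hq1 : q.parts (x - 1) = 1 := by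
          rw [h2' (x - 1) (by omega)]; simp only [hkp]; split_ifs <;> (try simp_all) <;> omega
        have := q.antitone' (show x - 1 ≤ x by omega)
        omega
    · by_cases hxb1 : x = b + 1
      · right; left
        funext y
        by_cases hy : y = x
        · subst hy; rw [h1]; simp only [hkp]; split_ifs <;> (try simp_all) <;> omega
        · rw [h2' y hy]; simp only [hkp]; split_ifs <;> (try simp_all) <;> omega
      · exfalso
        have hq1 : q.parts (x - 1) = 0 := by
          rw [h2' (x - 1) (by omega)]; simp only [hkp]; split_ifs <;> (try simp_all) <;> omega
        have hqx : q.parts x = 1 := by rw [h1]; simp only [hkp]; split_ifs <;> (try simp_all) <;> omega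
        have := q.antitone' (show x - 1 ≤ x by omega)
        omega

lemma pcovers_zero_classify {p q : YPartition}
    (hp : ∀ y, p.parts y = 0) (h : PCovers p q) : q.parts = hkp 1 0 := by
  obtain ⟨x, h1, h2⟩ := h
  rw [hp x] at h1
  have hx : x = 0 := by
    by_contra hx
    have hq1 : q.parts (x - 1) = 0 := by rw [h2 (x - 1) (by omega), hp]
    have := q.antitone' (show x - 1 ≤ x by omega)
    omega
  subst hx
  funext y
  rcases Nat.eq_zero_or_pos y with rfl | hy
  · rw [h1]; simp [hkp]
  · rw [h2 y (by omega), hp]; simp only [hkp]; split_ifs <;> (try simp_all) <;> omega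

lemma cov_top (a b : ℕ) (ha : 1 ≤ a) :
    PCovers (YPartition.ofMul (hook a b)) (YPartition.ofMul (hook (a + 1) b)) := by
  refine ⟨0, ?_, ?_⟩
  · rw [parts_hook a b ha, parts_hook (a + 1) b (by omega)]; simp [hkp]
  · intro y hy
    rw [parts_hook a b ha, parts_hook (a + 1) b (by omega)]
    simp only [hkp]; split_ifs <;> (try simp_all) <;> omega

lemma cov_bot (a b : ℕ) (ha : 1 ≤ a) :
    PCovers (YPartition.ofMul (hook a b)) (YPartition.ofMul (hook a (b + 1))) := by
  refine ⟨b + 1, ?_, ?_⟩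
  · rw [parts_hook a b ha, parts_hook a (b + 1) ha]; simp only [hkp]; split_ifs <;> (try simp_all) <;> omega
  · intro y hy
    rw [parts_hook a b ha, parts_hook a (b + 1) ha]
    simp only [hkp]; split_ifs <;> (try simp_all) <;> omega

lemma cov_zero : PCovers (YPartition.ofMul 0) (YPartition.ofMul (hook 1 0)) := by
  refine ⟨0, ?_, ?_⟩
  · rw [parts_zeroP' 0, parts_hook 1 0 le_rfl]; simp [hkp]
  · intro y hy
    rw [parts_zeroP' y, parts_hook 1 0 le_rfl]
    simp only [hkp]; split_ifs <;> (try simp_all) <;> omega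

lemma PS_fst_one_le {n : ℕ} {l : Bipartition} (hl : l ∈ PS n) : l.1.parts 1 ≤ 1 := by
  have key : ∀ a b : ℕ, 1 ≤ a → (YPartition.ofMul (hook a b)).parts 1 ≤ 1 := by
    intro a b ha
    rw [parts_hook a b ha]; simp only [hkp]; split_ifs <;> (try simp_all) <;> omega
  rcases hl with ⟨i, j, h1, h2, h3, rfl⟩ | ⟨j, hj, rfl⟩ | ⟨i, h1, h2, rfl⟩
  · exact key _ _ (by omega)
  · exact key _ _ (by omega)
  · have : (YPartition.ofMul (0 : Multiset ℕ)).parts 1 ≤ 1 := by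
      rw [parts_zeroP' 1]; omega
    exact this

lemma classify_D {n i : ℕ} (hn : 2 ≤ n) (hi : 1 ≤ i) {m : Bipartition} (hm : m ∈ PS n)
    (h1 : m.1.parts = hkp i (2 * n - i - 1)) (h2 : m.2.parts = hkp 1 0) :
    i = n - 1 ∧ m = bip (hook (n - 1) n) {1} := by
  rcases hm with ⟨i', j, hi'0, hi'n, hjn, rfl⟩ | ⟨j, hj, rfl⟩ | ⟨i', hi'0, hi', rfl⟩
  · have e2 : hkp (n - j + 1) (i' - 1) = hkp 1 0 := by
      rw [← parts_hook (n - j + 1) (i' - 1) (by omega)]; exact h2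
    have ej : n - j + 1 = 1 := by
      have := congrFun e2 0; simpa [hkp] using this
    have hjn' : j = n := by omega
    have ei1 : i' = 1 := by
      by_contra hne
      have hge : 1 ≤ i' - 1 := by omega
      have := congrFun e2 1
      simp [hkp, hge] at this
    have e1 : hkp (n - i') j = hkp i (2 * n - i - 1) := by
      rw [← parts_hook (n - i') j (by omega)]; exact h1
    have ein : n - i' = i := by
      have := congrFun e1 0; simpa [hkp] using this
    constructor
    · omega
    · rw [ei1, hjn']
      congr 1
      rw [show n - n + 1 = 1 by omega]
      exact hook_one_zero
  · exfalso
    have hz : (bip (hook (2 * n - j) j) (0 : Multiset ℕ)).2.parts = fun _ => 0 :=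
      parts_zeroP
    have := congrFun (hz.symm.trans h2) 0
    simp [hkp] at this
  · exfalso
    have hz : (bip (0 : Multiset ℕ) (hook (2 * n - i' + 1) (i' - 1))).1.parts
        = fun _ => 0 := parts_zeroP
    have := congrFun (hz.symm.trans h1) 0
    simp [hkp] at this
    omega

/-- The key per-index computation. -/
lemma key_step (n i : ℕ) (hn : 2 ≤ n) (hi1 : 1 ≤ i) (hi2 : i ≤ 2 * n - 1) :
    projS (PS n) (addB (bip (hook i (2 * n - i - 1)) 0))
      = deltaB (bip (hook (i + 1) (2 * n - i - 1)) 0)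
        + deltaB (bip (hook i (2 * n - i)) 0)
        + (if i = n - 1 then deltaB (bip (hook (n - 1) n) {1}) else 0) := by
  have hsub : 2 * n - i = 2 * n - i - 1 + 1 := by omega
  -- parts of the components
  have hA1 : (bip (hook (i + 1) (2 * n - i - 1)) (0 : Multiset ℕ)).1.parts
      = hkp (i + 1) (2 * n - i - 1) := parts_hook _ _ (by omega)
  have hB1 : (bip (hook i (2 * n - i)) (0 : Multiset ℕ)).1.parts
      = hkp i (2 * n - i) := parts_hook _ _ hi1
  have hA2 : ∀ y, (bip (hook (i + 1) (2 * n - i - 1)) (0 : Multiset ℕ)).2.parts y = 0 :=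
    parts_zeroP'
  have hB2 : ∀ y, (bip (hook i (2 * n - i)) (0 : Multiset ℕ)).2.parts y = 0 :=
    parts_zeroP'
  have hD2 : (bip (hook (n - 1) n) ({1} : Multiset ℕ)).2.parts = hkp 1 0 := by
    show (YPartition.ofMul ({1} : Multiset ℕ)).parts = hkp 1 0
    rw [← hook_one_zero]; exact parts_hook 1 0 le_rfl
  have hL1 : (bip (hook i (2 * n - i - 1)) (0 : Multiset ℕ)).1.parts
      = hkp i (2 * n - i - 1) := parts_hook _ _ hi1
  have hL2 : ∀ y, (bip (hook i (2 * n - i - 1)) (0 : Multiset ℕ)).2.parts y = 0 :=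
    parts_zeroP'
  -- distinctness
  have hABne : bip (hook (i + 1) (2 * n - i - 1)) (0 : Multiset ℕ)
      ≠ bip (hook i (2 * n - i)) 0 := by
    intro h
    have h0 : (bip (hook (i + 1) (2 * n - i - 1)) (0 : Multiset ℕ)).1.parts 0
        = (bip (hook i (2 * n - i)) (0 : Multiset ℕ)).1.parts 0 := by rw [h]
    rw [hA1, hB1] at h0
    simp [hkp] at h0
  have hADne : bip (hook (i + 1) (2 * n - i - 1)) (0 : Multiset ℕ)
      ≠ bip (hook (n - 1) n) {1} := by
    intro h
    have h0 : (bip (hook (i + 1) (2 * n - i - 1)) (0 : Multiset ℕ)).2.parts 0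
        = (bip (hook (n - 1) n) ({1} : Multiset ℕ)).2.parts 0 := by rw [h]
    rw [hA2 0, hD2] at h0
    simp [hkp] at h0
  have hBDne : bip (hook i (2 * n - i)) (0 : Multiset ℕ)
      ≠ bip (hook (n - 1) n) {1} := by
    intro h
    have h0 : (bip (hook i (2 * n - i)) (0 : Multiset ℕ)).2.parts 0
        = (bip (hook (n - 1) n) ({1} : Multiset ℕ)).2.parts 0 := by rw [h]
    rw [hB2 0, hD2] at h0
    simp [hkp] at h0
  -- memberships
  have hA_PS : bip (hook (i + 1) (2 * n - i - 1)) (0 : Multiset ℕ) ∈ PS n := by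
    refine Or.inr (Or.inl ⟨2 * n - i - 1, by omega, ?_⟩)
    rw [show 2 * n - (2 * n - i - 1) = i + 1 by omega]
  have hB_PS : bip (hook i (2 * n - i)) (0 : Multiset ℕ) ∈ PS n := by
    refine Or.inr (Or.inl ⟨2 * n - i, by omega, ?_⟩)
    rw [show 2 * n - (2 * n - i) = i by omega]
  have hD_PS : bip (hook (n - 1) n) ({1} : Multiset ℕ) ∈ PS n := by
    refine Or.inl ⟨1, n, by omega, by omega, le_rfl, ?_⟩
    rw [show n - 1 = n - 1 by rfl]
    congr 1
    rw [show n - n + 1 = 1 by omega]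
    exact hook_one_zero.symm
  -- coverings
  have hA_cov : BipCovers (bip (hook i (2 * n - i - 1)) 0)
      (bip (hook (i + 1) (2 * n - i - 1)) 0) :=
    Or.inl ⟨cov_top i (2 * n - i - 1) hi1, rfl⟩
  have hB_cov : BipCovers (bip (hook i (2 * n - i - 1)) 0)
      (bip (hook i (2 * n - i)) 0) := by
    refine Or.inl ⟨?_, rfl⟩
    have := cov_bot i (2 * n - i - 1) hi1
    rwa [← hsub] at this
  have hD_cov : i = n - 1 → BipCovers (bip (hook i (2 * n - i - 1)) 0)
      (bip (hook (n - 1) n) {1}) := by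
    intro hin
    refine Or.inr ⟨?_, ?_⟩
    · show YPartition.ofMul (hook (n - 1) n) = YPartition.ofMul (hook i (2 * n - i - 1))
      rw [hin, show 2 * n - (n - 1) - 1 = n by omega]
    · show PCovers (YPartition.ofMul 0) (YPartition.ofMul ({1} : Multiset ℕ))
      rw [← hook_one_zero]
      exact cov_zero
  funext m
  simp only [Pi.add_apply, projS, addB, deltaB]
  by_cases hAm : m = bip (hook (i + 1) (2 * n - i - 1)) 0
  · subst hAm
    rw [if_pos hA_PS, if_pos hA_cov, if_pos rfl, if_neg hABne]
    split_ifs with h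
    · show (1 : ℤ) = 1 + 0 + (if bip (hook (i + 1) (2 * n - i - 1)) (0 : Multiset ℕ)
          = bip (hook (n - 1) n) {1} then (1 : ℤ) else 0)
      rw [if_neg hADne]; ring
    · show (1 : ℤ) = 1 + 0 + 0
      ring
  · by_cases hBm : m = bip (hook i (2 * n - i)) 0
    · subst hBm
      rw [if_pos hB_PS, if_pos hB_cov, if_neg (fun h => hABne h.symm), if_pos rfl]
      split_ifs with h
      · show (1 : ℤ) = 0 + 1 + (if bip (hook i (2 * n - i)) (0 : Multiset ℕ)
            = bip (hook (n - 1) n) {1} then (1 : ℤ) else 0)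
        rw [if_neg hBDne]; ring
      · show (1 : ℤ) = 0 + 1 + 0
        ring
    · by_cases hDm : i = n - 1 ∧ m = bip (hook (n - 1) n) {1}
      · obtain ⟨hin, rfl⟩ := hDm
        rw [if_pos hD_PS, if_pos (hD_cov hin), if_neg (fun h => hADne h.symm),
          if_neg (fun h => hBDne h.symm), if_pos hin]
        show (1 : ℤ) = 0 + 0 + (if bip (hook (n - 1) n) ({1} : Multiset ℕ)
            = bip (hook (n - 1) n) {1} then (1 : ℤ) else 0)
        rw [if_pos rfl]; ring
      · -- generic case: both sides are 0
        rw [if_neg hAm, if_neg hBm]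
        have hD0 : (if i = n - 1
            then deltaB (bip (hook (n - 1) n) {1})
            else (0 : Bipartition → ℤ)) m = 0 := by
          split_ifs with h
          · show (if m = bip (hook (n - 1) n) {1} then (1 : ℤ) else 0) = 0
            rw [if_neg (fun hm' => hDm ⟨h, hm'⟩)]
          · rfl
        rw [hD0]
        split_ifs with hm hc
        · exfalso
          rcases hc with ⟨hc1, hc2⟩ | ⟨hc1, hc2⟩
          · rcases pcovers_classify hi1 hL1 hc1 with h' | h' | h'
            · exact hAm (Prod.ext (YPartition.ext' (h'.trans hA1.symm)) hc2)
            · refine hBm (Prod.ext (YPartition.ext' ?_) hc2)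
              rw [h', hB1, ← hsub]
            · have := PS_fst_one_le hm
              omega
          · have h2' : m.2.parts = hkp 1 0 := pcovers_zero_classify hL2 hc2
            have h1' : m.1.parts = hkp i (2 * n - i - 1) := by
              rw [hc1]; exact hL1
            obtain ⟨hin, hmD⟩ := classify_D hn hi1 hm h1' h2'
            exact hDm ⟨hin, hmD⟩
        · ring
        · ring

end Aux

/-- `π_S(Σ_{i=1}^{2n-1} (-1)^{i-1} A(i1^{2n-i-1}.∅))
  = 1^{2n}.∅ + 2n.∅ + (-1)^n (n-1)1^n.1` for `S = PS(n)`. -/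
theorem decomposition_numbers_stmt12 (n : ℕ) (hn : 2 ≤ n) :
    projS (PS n)
        (∑ i ∈ Finset.Icc 1 (2 * n - 1),
          ((-1 : ℤ) ^ (i - 1)) • addB (bip (hook i (2 * n - i - 1)) 0))
      = deltaB (bip (Multiset.replicate (2 * n) 1) 0) + deltaB (bip {2 * n} 0)
        + ((-1 : ℤ) ^ n) • deltaB (bip (hook (n - 1) n) {1}) := by
  classical
  funext m
  -- pointwise form of the key step
  have hkey : ∀ i, 1 ≤ i → i ≤ 2 * n - 1 →
      projS (PS n) (addB (bip (hook i (2 * n - i - 1)) 0)) m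
        = deltaB (bip (hook (i + 1) (2 * n - (i + 1))) 0) m
          + deltaB (bip (hook i (2 * n - i)) 0) m
          + (if i = n - 1 then deltaB (bip (hook (n - 1) n) {1}) m else 0) := by
    intro i h1 h2
    have hk := congrFun (key_step n i hn h1 h2) m
    rw [hk]
    simp only [Pi.add_apply]
    rw [show 2 * n - i - 1 = 2 * n - (i + 1) by omega]
    congr 1
    split_ifs <;> rfl
  -- linearity of the projection, pointwise
  have hsum : projS (PS n)
        (∑ i ∈ Finset.Icc 1 (2 * n - 1),
          ((-1 : ℤ) ^ (i - 1)) • addB (bip (hook i (2 * n - i - 1)) 0)) m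
      = ∑ i ∈ Finset.Icc 1 (2 * n - 1),
          ((-1 : ℤ) ^ (i - 1)) *
            (projS (PS n) (addB (bip (hook i (2 * n - i - 1)) 0)) m) := by
    by_cases hm : m ∈ PS n <;>
      simp [projS, hm, Finset.sum_apply, Pi.smul_apply, smul_eq_mul]
  -- the abstract summation identity
  have main : ∀ (F : ℕ → ℤ) (dd : ℤ),
      ∑ i ∈ Finset.Icc 1 (2 * n - 1),
          ((-1 : ℤ) ^ (i - 1)) * (F (i + 1) + F i + (if i = n - 1 then dd else 0))
        = F 1 + F (2 * n) + ((-1 : ℤ) ^ n) * dd := by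
    intro F dd
    have hsplit : ∑ i ∈ Finset.Icc 1 (2 * n - 1),
          ((-1 : ℤ) ^ (i - 1)) * (F (i + 1) + F i + (if i = n - 1 then dd else 0))
        = (∑ i ∈ Finset.Icc 1 (2 * n - 1), ((-1 : ℤ) ^ (i - 1)) * (F (i + 1) + F i))
          + ∑ i ∈ Finset.Icc 1 (2 * n - 1),
              ((-1 : ℤ) ^ (i - 1)) * (if i = n - 1 then dd else 0) := by
      rw [← Finset.sum_add_distrib]
      exact Finset.sum_congr rfl (fun i _ => by ring)
    rw [hsplit]
    have htele : ∑ i ∈ Finset.Icc 1 (2 * n - 1), ((-1 : ℤ) ^ (i - 1)) * (F (i + 1) + F i)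
        = F (2 * n) + F 1 := by
      rw [show Finset.Icc 1 (2 * n - 1) = Finset.Ico 1 (2 * n) by
        ext x; simp only [Finset.mem_Icc, Finset.mem_Ico]; omega]
      rw [Finset.sum_Ico_eq_sum_range]
      have hterm : ∀ k, ((-1 : ℤ) ^ (1 + k - 1)) * (F (1 + k + 1) + F (1 + k))
          = (fun j => -(((-1 : ℤ) ^ j) * F (j + 1))) (k + 1)
            - (fun j => -(((-1 : ℤ) ^ j) * F (j + 1))) k := by
        intro k
        show ((-1 : ℤ) ^ (1 + k - 1)) * (F (1 + k + 1) + F (1 + k))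
            = -(((-1 : ℤ) ^ (k + 1)) * F (k + 1 + 1)) - -(((-1 : ℤ) ^ k) * F (k + 1))
        rw [show 1 + k - 1 = k by omega, show 1 + k + 1 = k + 1 + 1 by omega,
          show 1 + k = k + 1 by omega, pow_succ]
        ring
      rw [Finset.sum_congr rfl (fun k _ => hterm k),
        Finset.sum_range_sub (fun j => -(((-1 : ℤ) ^ j) * F (j + 1)))]
      show -(((-1 : ℤ) ^ (2 * n - 1)) * F (2 * n - 1 + 1))
          - -(((-1 : ℤ) ^ 0) * F (0 + 1)) = F (2 * n) + F 1
      rw [show 2 * n - 1 + 1 = 2 * n by omega, show (0 : ℕ) + 1 = 1 by omega,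
        Odd.neg_one_pow (⟨n - 1, by omega⟩ : Odd (2 * n - 1))]
      ring
    have hsingle : ∑ i ∈ Finset.Icc 1 (2 * n - 1),
          ((-1 : ℤ) ^ (i - 1)) * (if i = n - 1 then dd else 0)
        = ((-1 : ℤ) ^ n) * dd := by
      rw [Finset.sum_eq_single_of_mem (n - 1)
        (Finset.mem_Icc.2 ⟨by omega, by omega⟩)
        (fun b _ hb => by rw [if_neg hb, mul_zero])]
      rw [if_pos rfl]
      have hpow : ((-1 : ℤ) ^ n) = ((-1 : ℤ) ^ (n - 1 - 1)) := by
        rw [show n = (n - 1 - 1) + 2 by omega, pow_add]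
        norm_num
      rw [hpow]
    rw [htele, hsingle]
    ring
  rw [hsum]
  rw [Finset.sum_congr rfl (fun i hi => by
    rw [hkey i (Finset.mem_Icc.1 hi).1 (Finset.mem_Icc.1 hi).2])]
  have := main (fun k => deltaB (bip (hook k (2 * n - k)) 0) m)
    (deltaB (bip (hook (n - 1) n) {1}) m)
  rw [this]
  -- identify the right-hand side
  have e1 : Multiset.replicate (2 * n) 1 = hook 1 (2 * n - 1) := by
    rw [show 2 * n = (2 * n - 1) + 1 by omega, Multiset.replicate_succ]
    rfl
  have e2 : ({2 * n} : Multiset ℕ) = hook (2 * n) (2 * n - 2 * n) := by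
    rw [show 2 * n - 2 * n = 0 by omega]
    rfl
  simp only [Pi.add_apply, Pi.smul_apply, smul_eq_mul]
  rw [e1, e2]
  try ring
end
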